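/- arXiv:2004.03795 — 2 statements merged into one kernel-verified Lean document; each statement's English description precedes it below -/
import Mathlib

section
/- (Fundamental inequalities.) Assume hypothesis (H2) with constant D. Then there is a constant c ≥ 0, depending only on D, such that for every real λ and all integers 0 ≤ l ≤ m ≤ n one has e^{−c|λ|} ≤ Z_{l,n}(λ) / (Z_{l,m}(λ) · Z_{m,n}(λ)) ≤ e^{c|λ|}. -/
open MeasureTheory Filter Finset
open scoped ENNReal Topology

noncomputable section

/-- The shift map `T` on `ℕ → S`, `(Tx)_n = x_{n+1}`. -/
def shift {S : Type*} (x : ℕ → S) : ℕ → S := fun n => x (n + 1)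

/-- The cylinder `[a_0, …, a_{m-1}]` of all `y` with `y_i = a_i` for `0 ≤ i < m`. -/
def cyl {S : Type*} {m : ℕ} (a : Fin m → S) : Set (ℕ → S) :=
  {y : ℕ → S | ∀ i : Fin m, y i = a i}

/-- The partial weighted Birkhoff sum `S_{m,n} f(x) = ∑_{k=m}^{n-1} f_k(T^k x)`. -/
def birk {S : Type*} (f : ℕ → (ℕ → S) → ℝ) (m n : ℕ) (x : ℕ → S) : ℝ :=
  ∑ k ∈ Finset.Ico m n, f k (shift^[k] x)

/-- The partition function `Z_{m,n}(λ) = ∫ exp(λ S_{m,n}f) dσ`. -/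
def Zmn {S : Type*} [MeasurableSpace S] (σ : Measure (ℕ → S))
    (f : ℕ → (ℕ → S) → ℝ) (lam : ℝ) (m n : ℕ) : ℝ :=
  ∫ x, Real.exp (lam * birk f m n x) ∂σ

/-- Hypothesis (H2): uniformly bounded distortion. -/
def H2 {S : Type*} (f : ℕ → (ℕ → S) → ℝ) (D : ℝ) : Prop :=
  ∀ N : ℕ, 1 ≤ N → ∀ x y : ℕ → S, (∀ i, i < N → x i = y i) →
    ∑ k ∈ Finset.range N, |f k (shift^[k] x) - f k (shift^[k] y)| ≤ D


def trunc {S : Type*} (s0 : S) (n : ℕ) (x : ℕ → S) : ℕ → S := fun i => if i < n then x i else s0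

lemma shift_iter {S : Type*} (x : ℕ → S) (k i : ℕ) : shift^[k] x i = x (i + k) := by
  induction k generalizing x i with
  | zero => rfl
  | succ k ih => rw [Function.iterate_succ_apply, ih]; rfl

lemma birk_congr_ge {S : Type*} (f : ℕ → (ℕ → S) → ℝ) (m n : ℕ) {x y : ℕ → S}
    (h : ∀ j, m ≤ j → x j = y j) : birk f m n x = birk f m n y := by
  unfold birk
  refine Finset.sum_congr rfl fun k hk => ?_
  have hmk : m ≤ k := (Finset.mem_Ico.mp hk).1
  congr 1
  funext i
  rw [shift_iter, shift_iter]
  exact h _ (le_trans hmk (Nat.le_add_left _ _))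

lemma abs_birk_sub_le {S : Type*} {f : ℕ → (ℕ → S) → ℝ} {D : ℝ} (hH2 : H2 f D) (hD : 0 ≤ D)
    {l m n : ℕ} (hlm : l ≤ m) (hmn : m ≤ n) {x y : ℕ → S}
    (h : ∀ i, i < n → x i = y i) : |birk f l m x - birk f l m y| ≤ D := by
  rcases Nat.eq_zero_or_pos n with hn | hn
  · subst hn
    have hm0 : m = 0 := Nat.le_zero.mp hmn
    have hl0 : l = 0 := by omega
    subst hm0; subst hl0
    simpa [birk] using hD
  · have hsub : Finset.Ico l m ⊆ Finset.range n := by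
      intro k hk; simp only [Finset.mem_Ico, Finset.mem_range] at *; omega
    calc |birk f l m x - birk f l m y|
        = |∑ k ∈ Finset.Ico l m, (f k (shift^[k] x) - f k (shift^[k] y))| := by
          rw [Finset.sum_sub_distrib]; rfl
      _ ≤ ∑ k ∈ Finset.Ico l m, |f k (shift^[k] x) - f k (shift^[k] y)| :=
          Finset.abs_sum_le_sum_abs _ _
      _ ≤ ∑ k ∈ Finset.range n, |f k (shift^[k] x) - f k (shift^[k] y)| :=
          Finset.sum_le_sum_of_subset_of_nonneg hsub (fun _ _ _ => abs_nonneg _)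
      _ ≤ D := hH2 n hn x y h

lemma birk_abs_le {S : Type*} {f : ℕ → (ℕ → S) → ℝ} {M : ℝ} (hfb : ∀ k x, |f k x| ≤ M)
    (hM : 0 ≤ M) (l m : ℕ) (x : ℕ → S) : |birk f l m x| ≤ (m : ℝ) * M := by
  calc |birk f l m x| ≤ ∑ k ∈ Finset.Ico l m, |f k (shift^[k] x)| :=
        Finset.abs_sum_le_sum_abs _ _
    _ ≤ ∑ _k ∈ Finset.Ico l m, M := Finset.sum_le_sum fun k _ => hfb k _
    _ = ((m - l : ℕ) : ℝ) * M := by simp [Nat.card_Ico]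
    _ ≤ (m : ℝ) * M := by
        apply mul_le_mul_of_nonneg_right _ hM
        exact_mod_cast Nat.sub_le m l

lemma continuous_shift {S : Type*} [TopologicalSpace S] : Continuous (shift : (ℕ → S) → ℕ → S) :=
  continuous_pi fun n => continuous_apply (n + 1)

lemma continuous_birk {S : Type*} [TopologicalSpace S] {f : ℕ → (ℕ → S) → ℝ}
    (hfc : ∀ k, Continuous (f k)) (l m : ℕ) : Continuous (birk f l m) :=
  continuous_finset_sum _ fun k _ => (hfc k).comp (continuous_shift.iterate k)

lemma continuous_trunc {S : Type*} [TopologicalSpace S] (s0 : S) (n : ℕ) :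
    Continuous (trunc s0 n) := by
  apply continuous_pi
  intro i
  unfold trunc
  by_cases h : i < n
  · simpa [h] using (continuous_apply i)
  · simpa [h] using (continuous_const : Continuous fun _ : ℕ → S => s0)

lemma measurableSet_cyl {S : Type*} [TopologicalSpace S] [DiscreteTopology S] [MeasurableSpace S]
    [BorelSpace S] {m : ℕ} (a : Fin m → S) : MeasurableSet (cyl a) := by
  have : cyl a = ⋂ i : Fin m, (fun y : ℕ → S => y (i : ℕ)) ⁻¹' {a i} := by
    ext y; simp [cyl, Set.mem_iInter]
  rw [this]
  exact MeasurableSet.iInter fun i =>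
    (measurable_pi_apply _) ((isClosed_singleton).measurableSet)

lemma integrable_bdd {X : Type*} [MeasurableSpace X] (μ : Measure X) [IsFiniteMeasure μ]
    {u : X → ℝ} (hm : Measurable u) (C : ℝ) (hC : ∀ x, |u x| ≤ C) : Integrable u μ :=
  ⟨hm.aestronglyMeasurable,
    HasFiniteIntegral.of_bounded (C := C) (ae_of_all _ (by simpa [Real.norm_eq_abs] using hC))⟩

lemma integrable_exp_bdd {X : Type*} [MeasurableSpace X] (μ : Measure X) [IsFiniteMeasure μ]
    {u : X → ℝ} (hm : Measurable u) (C : ℝ) (hC : ∀ x, |u x| ≤ C) :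
    Integrable (fun x => Real.exp (u x)) μ := by
  refine integrable_bdd μ (Real.measurable_exp.comp hm) (Real.exp C) fun x => ?_
  rw [abs_of_pos (Real.exp_pos _)]
  exact Real.exp_le_exp.2 ((le_abs_self _).trans (hC x))

lemma exp_int_le {X : Type*} [MeasurableSpace X] (μ : Measure X) [IsProbabilityMeasure μ]
    {u v : X → ℝ} (hu : Measurable u) (hv : Measurable v)
    (Bu : ℝ) (hBu : ∀ x, |u x| ≤ Bu) (Bv : ℝ) (hBv : ∀ x, |v x| ≤ Bv)
    (d : ℝ) (h : ∀ x, u x ≤ v x + d) :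
    ∫ x, Real.exp (u x) ∂μ ≤ Real.exp d * ∫ x, Real.exp (v x) ∂μ := by
  have h1 := integrable_exp_bdd μ hu Bu hBu
  have h2 := integrable_exp_bdd μ hv Bv hBv
  calc ∫ x, Real.exp (u x) ∂μ ≤ ∫ x, Real.exp d * Real.exp (v x) ∂μ := by
        refine integral_mono h1 (h2.const_mul _) fun x => ?_
        rw [← Real.exp_add]
        exact Real.exp_le_exp.2 (by linarith [h x])
    _ = Real.exp d * ∫ x, Real.exp (v x) ∂μ := MeasureTheory.integral_const_mul _ _

lemma exp_int_pos {X : Type*} [MeasurableSpace X] (μ : Measure X) [IsProbabilityMeasure μ]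
    {u : X → ℝ} (hu : Measurable u) (B : ℝ) (hB : ∀ x, |u x| ≤ B) :
    0 < ∫ x, Real.exp (u x) ∂μ := by
  have h1 := integrable_exp_bdd μ hu B hB
  have : Real.exp (-B) ≤ ∫ x, Real.exp (u x) ∂μ := by
    calc Real.exp (-B) = ∫ _x, Real.exp (-B) ∂μ := by simp
      _ ≤ ∫ x, Real.exp (u x) ∂μ := by
          refine integral_mono (integrable_const _) h1 fun x => ?_
          exact Real.exp_le_exp.2 (by have := (abs_le.mp (hB x)).1; linarith)
  linarith [Real.exp_pos (-B)]

lemma integral_cyl_fun {S : Type*} [Fintype S] [TopologicalSpace S] [DiscreteTopology S]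
    [MeasurableSpace S] [BorelSpace S] (σ : Measure (ℕ → S)) [IsProbabilityMeasure σ]
    (hσ : ∀ (m : ℕ) (a : Fin m → S), σ (cyl a) = (Fintype.card S : ℝ≥0∞)⁻¹ ^ m)
    (n : ℕ) (H : (Fin n → S) → ℝ) :
    ∫ x, H (fun i => x i) ∂σ = (∑ a : Fin n → S, H a) * ((Fintype.card S : ℝ)⁻¹) ^ n := by
  have key : ∀ x : ℕ → S,
      H (fun i => x i) = ∑ a : Fin n → S, Set.indicator (cyl a) (fun _ => H a) x := by
    intro x
    rw [Finset.sum_eq_single (fun i : Fin n => x i)]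
    · rw [Set.indicator_of_mem]
      exact fun i => rfl
    · intro a _ hne
      apply Set.indicator_of_notMem
      intro hx
      exact hne (funext fun i => (hx i).symm)
    · intro h; exact absurd (Finset.mem_univ _) h
  simp_rw [key]
  rw [integral_finset_sum _ (fun a _ => (integrable_const (H a)).indicator (measurableSet_cyl a))]
  rw [Finset.sum_mul]
  refine Finset.sum_congr rfl fun a _ => ?_
  rw [integral_indicator_const _ (measurableSet_cyl a), measureReal_def, hσ n a, smul_eq_mul, mul_comm]
  congr 1
  simp

def splitEquiv (S : Type*) {m n : ℕ} (h : m ≤ n) :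
    (Fin n → S) ≃ ((Fin m → S) × (Fin (n - m) → S)) where
  toFun a := (fun i => a ⟨i.1, lt_of_lt_of_le i.2 h⟩,
              fun j => a ⟨m + j.1, by have := j.2; omega⟩)
  invFun pr i := if hi : i.1 < m then pr.1 ⟨i.1, hi⟩ else pr.2 ⟨i.1 - m, by have := i.2; omega⟩
  left_inv a := by
    funext i
    dsimp only
    split
    · exact congrArg a (Fin.ext rfl)
    · next hi => exact congrArg a (Fin.ext (by simp; omega))
  right_inv pr := by
    refine Prod.ext ?_ ?_ <;> funext i <;> dsimp only
    · rw [dif_pos i.2]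
    · rw [dif_neg (by omega)]
      exact congrArg pr.2 (Fin.ext (by simp))

/-- extension of a finite word by `s0` -/
def extw {S : Type*} (s0 : S) {n : ℕ} (a : Fin n → S) : ℕ → S :=
  fun i => if h : i < n then a ⟨i, h⟩ else s0

/-- extension of a finite word placed at positions `[m, n)` -/
def extw2 {S : Type*} (s0 : S) (m n : ℕ) (r : Fin (n - m) → S) : ℕ → S :=
  fun j => if h : m ≤ j ∧ j < n then r ⟨j - m, by omega⟩ else s0

lemma extw_res {S : Type*} (s0 : S) (n : ℕ) (x : ℕ → S) :
    extw s0 (fun i : Fin n => x i) = trunc s0 n x := by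
  funext i
  unfold extw trunc
  split <;> simp_all

lemma trunc_trunc {S : Type*} (s0 : S) {m n : ℕ} (h : m ≤ n) (x : ℕ → S) :
    trunc s0 m (trunc s0 n x) = trunc s0 m x := by
  funext i
  unfold trunc
  by_cases hi : i < m
  · simp [hi, show i < n by omega]
  · simp [hi]

lemma prod_split {S : Type*} [Fintype S] [TopologicalSpace S] [DiscreteTopology S]
    [MeasurableSpace S] [BorelSpace S] (hq : 2 ≤ Fintype.card S)
    (σ : Measure (ℕ → S)) [IsProbabilityMeasure σ]
    (hσ : ∀ (m : ℕ) (a : Fin m → S), σ (cyl a) = (Fintype.card S : ℝ≥0∞)⁻¹ ^ m)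
    (s0 : S) (f : ℕ → (ℕ → S) → ℝ) (lam : ℝ) {l m n : ℕ} (hlm : l ≤ m) (hmn : m ≤ n) :
    ∫ x, Real.exp (lam * birk f l m (trunc s0 m x) + lam * birk f m n (trunc s0 n x)) ∂σ
      = (∫ x, Real.exp (lam * birk f l m (trunc s0 m x)) ∂σ)
        * ∫ x, Real.exp (lam * birk f m n (trunc s0 n x)) ∂σ := by
  classical
  set q : ℝ := (Fintype.card S : ℝ) with hqdef
  have hq0 : q ≠ 0 := by
    simp only [hqdef, ne_eq, Nat.cast_eq_zero]
    omega
  set P : (Fin m → S) → ℝ := fun p => Real.exp (lam * birk f l m (extw s0 p)) with hP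
  set Q : (Fin (n - m) → S) → ℝ := fun r => Real.exp (lam * birk f m n (extw2 s0 m n r)) with hQ
  set e := splitEquiv S hmn with he
  -- key pointwise facts about e.symm
  have hfst : ∀ pr : (Fin m → S) × (Fin (n - m) → S),
      trunc s0 m (extw s0 (e.symm pr)) = extw s0 pr.1 := by
    intro pr
    funext i
    simp only [trunc, extw, he, splitEquiv, Equiv.coe_fn_symm_mk]
    by_cases hi : i < m
    · rw [if_pos hi, dif_pos (show i < n by omega), dif_pos hi, dif_pos hi]
    · rw [if_neg hi, dif_neg hi]
  have hsnd : ∀ pr : (Fin m → S) × (Fin (n - m) → S),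
      birk f m n (extw s0 (e.symm pr)) = birk f m n (extw2 s0 m n pr.2) := by
    intro pr
    apply birk_congr_ge
    intro j hj
    simp only [extw, extw2, he, splitEquiv, Equiv.coe_fn_symm_mk]
    by_cases hjn : j < n
    · rw [dif_pos hjn, dif_neg (by omega), dif_pos ⟨hj, hjn⟩]
    · rw [dif_neg hjn, dif_neg (by omega)]
  -- the three integrals as finite sums
  have I1 : ∫ x, Real.exp (lam * birk f l m (trunc s0 m x) + lam * birk f m n (trunc s0 n x)) ∂σ
      = (∑ a : Fin n → S,
          Real.exp (lam * birk f l m (trunc s0 m (extw s0 a)) + lam * birk f m n (extw s0 a)))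
        * (q⁻¹) ^ n := by
    rw [← integral_cyl_fun σ hσ n (fun a =>
      Real.exp (lam * birk f l m (trunc s0 m (extw s0 a)) + lam * birk f m n (extw s0 a)))]
    refine integral_congr_ae (ae_of_all _ fun x => ?_)
    simp only [extw_res, trunc_trunc s0 hmn]
  have I2 : ∫ x, Real.exp (lam * birk f l m (trunc s0 m x)) ∂σ
      = (∑ p : Fin m → S, P p) * (q⁻¹) ^ m := by
    rw [← integral_cyl_fun σ hσ m P]
    refine integral_congr_ae (ae_of_all _ fun x => ?_)
    simp only [hP, extw_res]
  have I3 : ∫ x, Real.exp (lam * birk f m n (trunc s0 n x)) ∂σ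
      = (∑ a : Fin n → S, Real.exp (lam * birk f m n (extw s0 a))) * (q⁻¹) ^ n := by
    rw [← integral_cyl_fun σ hσ n (fun a => Real.exp (lam * birk f m n (extw s0 a)))]
    refine integral_congr_ae (ae_of_all _ fun x => ?_)
    simp only [extw_res]
  -- rewrite the big sums via the equivalence
  have S1 : (∑ a : Fin n → S,
        Real.exp (lam * birk f l m (trunc s0 m (extw s0 a)) + lam * birk f m n (extw s0 a)))
      = (∑ p : Fin m → S, P p) * (∑ r : Fin (n - m) → S, Q r) := by
    rw [← Equiv.sum_comp e.symm (fun a =>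
      Real.exp (lam * birk f l m (trunc s0 m (extw s0 a)) + lam * birk f m n (extw s0 a)))]
    rw [Fintype.sum_prod_type, Finset.sum_mul_sum]
    refine Finset.sum_congr rfl fun p _ => Finset.sum_congr rfl fun r _ => ?_
    rw [hfst (p, r), hsnd (p, r), Real.exp_add, hP, hQ]
  have S2 : (∑ a : Fin n → S, Real.exp (lam * birk f m n (extw s0 a)))
      = (q ^ m) * (∑ r : Fin (n - m) → S, Q r) := by
    rw [← Equiv.sum_comp e.symm (fun a => Real.exp (lam * birk f m n (extw s0 a)))]
    rw [Fintype.sum_prod_type]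
    have : ∀ (p : Fin m → S) (r : Fin (n - m) → S),
        Real.exp (lam * birk f m n (extw s0 (e.symm (p, r)))) = Q r := by
      intro p r
      rw [hsnd (p, r), hQ]
    simp_rw [this]
    rw [Finset.sum_const, Finset.card_univ, Fintype.card_fun]
    simp [hqdef, mul_comm]
  rw [I1, I2, I3, S1, S2]
  have hqpow : (q⁻¹) ^ m * (q ^ m) = 1 := by
    rw [← mul_pow, inv_mul_cancel₀ hq0, one_pow]
  field_simp
  rw [mul_assoc _ _ (q ^ m), one_div, hqpow, mul_one]

/-- Fundamental inequalities: under (H2), there is a constant `c ≥ 0`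
depending only on the distortion constant `D` such that
`e^{-c|λ|} ≤ Z_{l,n}(λ)/(Z_{l,m}(λ)·Z_{m,n}(λ)) ≤ e^{c|λ|}` for all `0 ≤ l ≤ m ≤ n`. -/

theorem fundamental_inequalities {S : Type*} [Fintype S] [TopologicalSpace S]
    [DiscreteTopology S] [MeasurableSpace S] [BorelSpace S] (hq : 2 ≤ Fintype.card S)
    (σ : Measure (ℕ → S)) [IsProbabilityMeasure σ]
    (hσ : ∀ (m : ℕ) (a : Fin m → S), σ (cyl a) = (Fintype.card S : ℝ≥0∞)⁻¹ ^ m)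
    (f : ℕ → (ℕ → S) → ℝ) (hfc : ∀ n, Continuous (f n))
    (M : ℝ) (hfb : ∀ n x, |f n x| ≤ M)
    (D : ℝ) (hH2 : H2 f D) :
    ∃ c : ℝ, 0 ≤ c ∧ ∀ (lam : ℝ) (l m n : ℕ), l ≤ m → m ≤ n →
      Real.exp (-(c * |lam|)) ≤ Zmn σ f lam l n / (Zmn σ f lam l m * Zmn σ f lam m n) ∧
      Zmn σ f lam l n / (Zmn σ f lam l m * Zmn σ f lam m n) ≤ Real.exp (c * |lam|) := by
  obtain ⟨s0⟩ : Nonempty S := Fintype.card_pos_iff.mp (by omega)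
  have hD : 0 ≤ D := by
    have := hH2 1 le_rfl (fun _ => s0) (fun _ => s0) (fun _ _ => rfl)
    simpa using this
  have hM : 0 ≤ M := le_trans (abs_nonneg _) (hfb 0 fun _ => s0)
  refine ⟨4 * D, by linarith, ?_⟩
  intro lam l m n hlm hmn
  set d : ℝ := D * |lam| with hddef
  have hd : 0 ≤ d := mul_nonneg hD (abs_nonneg _)
  set E : ℝ := Real.exp d with hEdef
  have hE : 0 < E := Real.exp_pos d
  -- shorthand integrands
  set g : (ℕ → S) → ℝ := fun x => lam * birk f l m (trunc s0 m x) with hgdef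
  set h : (ℕ → S) → ℝ := fun x => lam * birk f m n (trunc s0 n x) with hhdef
  -- measurability
  have mbirk : ∀ a b : ℕ, Measurable fun x : ℕ → S => lam * birk f a b x :=
    fun a b => (continuous_const.mul (continuous_birk hfc a b)).measurable
  have mg : Measurable g :=
    (continuous_const.mul ((continuous_birk hfc l m).comp (continuous_trunc s0 m))).measurable
  have mh : Measurable h :=
    (continuous_const.mul ((continuous_birk hfc m n).comp (continuous_trunc s0 n))).measurable
  -- bounds
  set B : ℝ := |lam| * ((n : ℝ) * M) with hBdef
  have hbd : ∀ (a b : ℕ), b ≤ n → ∀ y : ℕ → S, |lam * birk f a b y| ≤ B := by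
    intro a b hb y
    rw [abs_mul]
    refine le_trans (mul_le_mul_of_nonneg_left (birk_abs_le hfb hM a b y) (abs_nonneg lam)) ?_
    rw [hBdef]
    have : (b : ℝ) * M ≤ (n : ℝ) * M :=
      mul_le_mul_of_nonneg_right (by exact_mod_cast hb) hM
    exact mul_le_mul_of_nonneg_left this (abs_nonneg lam)
  have hbg : ∀ y, |g y| ≤ B := fun y => hbd l m hmn _
  have hbh : ∀ y, |h y| ≤ B := fun y => hbd m n le_rfl _
  have hbgh : ∀ y, |g y + h y| ≤ B + B :=
    fun y => le_trans (abs_add_le _ _) (add_le_add (hbg y) (hbh y))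
  have hbln : ∀ y, |lam * birk f l n y| ≤ B := fun y => hbd l n le_rfl _
  have hblm : ∀ y, |lam * birk f l m y| ≤ B := fun y => hbd l m hmn _
  have hbmn : ∀ y, |lam * birk f m n y| ≤ B := fun y => hbd m n le_rfl _
  -- distortion estimates
  have hdist_g : ∀ x, |lam * birk f l m x - g x| ≤ d := by
    intro x
    rw [hgdef]
    simp only
    rw [← mul_sub, abs_mul, hddef, mul_comm D |lam|]
    refine mul_le_mul_of_nonneg_left ?_ (abs_nonneg lam)
    exact abs_birk_sub_le hH2 hD hlm le_rfl fun i hi => by simp [trunc, hi]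
  have hdist_h : ∀ x, |lam * birk f m n x - h x| ≤ d := by
    intro x
    rw [hhdef]
    simp only
    rw [← mul_sub, abs_mul, hddef, mul_comm D |lam|]
    refine mul_le_mul_of_nonneg_left ?_ (abs_nonneg lam)
    exact abs_birk_sub_le hH2 hD hmn le_rfl fun i hi => by simp [trunc, hi]
  have hsplit : ∀ x : ℕ → S, birk f l n x = birk f l m x + birk f m n x := by
    intro x
    rw [birk, birk, birk, Finset.sum_Ico_consecutive _ hlm hmn]
  have hdist : ∀ x, |lam * birk f l n x - (g x + h x)| ≤ d + d := by
    intro x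
    have : lam * birk f l n x - (g x + h x)
        = (lam * birk f l m x - g x) + (lam * birk f m n x - h x) := by
      rw [hsplit x]; ring
    rw [this]
    exact le_trans (abs_add_le _ _) (add_le_add (hdist_g x) (hdist_h x))
  -- the integrals
  set Ig : ℝ := ∫ x, Real.exp (g x) ∂σ with hIgdef
  set Ih : ℝ := ∫ x, Real.exp (h x) ∂σ with hIhdef
  have hZln : Zmn σ f lam l n = ∫ x, Real.exp (lam * birk f l n x) ∂σ := rfl
  have hZlm : Zmn σ f lam l m = ∫ x, Real.exp (lam * birk f l m x) ∂σ := rfl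
  have hZmn : Zmn σ f lam m n = ∫ x, Real.exp (lam * birk f m n x) ∂σ := rfl
  have hfact : ∫ x, Real.exp (g x + h x) ∂σ = Ig * Ih := by
    rw [hIgdef, hIhdef, hgdef, hhdef]
    exact prod_split hq σ hσ s0 f lam hlm hmn
  -- positivity
  have hIg : 0 < Ig := exp_int_pos σ mg B hbg
  have hIh : 0 < Ih := exp_int_pos σ mh B hbh
  have hZlmpos : 0 < Zmn σ f lam l m := by rw [hZlm]; exact exp_int_pos σ (mbirk l m) B hblm
  have hZmnpos : 0 < Zmn σ f lam m n := by rw [hZmn]; exact exp_int_pos σ (mbirk m n) B hbmn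
  -- comparisons
  have P1 : Zmn σ f lam l n ≤ Real.exp (d + d) * (Ig * Ih) := by
    rw [hZln, ← hfact]
    exact exp_int_le σ (mbirk l n) (mg.add mh) B hbln (B + B) hbgh (d + d)
      (fun x => by have := (abs_le.mp (hdist x)).2; rw [Pi.add_apply]; linarith)
  have P2 : Ig * Ih ≤ Real.exp (d + d) * Zmn σ f lam l n := by
    rw [hZln, ← hfact]
    exact exp_int_le σ (mg.add mh) (mbirk l n) (B + B) hbgh B hbln (d + d)
      (fun x => by have := (abs_le.mp (hdist x)).1; rw [Pi.add_apply]; linarith)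
  have P3 : Zmn σ f lam l m ≤ E * Ig := by
    rw [hZlm, hEdef]
    exact exp_int_le σ (mbirk l m) mg B hblm B hbg d
      (fun x => by have := (abs_le.mp (hdist_g x)).2; linarith)
  have P4 : Ig ≤ E * Zmn σ f lam l m := by
    rw [hZlm, hEdef]
    exact exp_int_le σ mg (mbirk l m) B hbg B hblm d
      (fun x => by have := (abs_le.mp (hdist_g x)).1; linarith)
  have P5 : Zmn σ f lam m n ≤ E * Ih := by
    rw [hZmn, hEdef]
    exact exp_int_le σ (mbirk m n) mh B hbmn B hbh d
      (fun x => by have := (abs_le.mp (hdist_h x)).2; linarith)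
  have P6 : Ih ≤ E * Zmn σ f lam m n := by
    rw [hZmn, hEdef]
    exact exp_int_le σ mh (mbirk m n) B hbh B hbmn d
      (fun x => by have := (abs_le.mp (hdist_h x)).1; linarith)
  have hE2 : Real.exp (d + d) = E * E := by rw [Real.exp_add]
  have hE4 : Real.exp (4 * D * |lam|) = E * E * (E * E) := by
    rw [show 4 * D * |lam| = d + d + (d + d) by rw [hddef]; ring,
      Real.exp_add, Real.exp_add, ← hEdef]
  have up : Zmn σ f lam l n ≤ (E * E * (E * E)) * (Zmn σ f lam l m * Zmn σ f lam m n) := by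
    calc Zmn σ f lam l n ≤ (E * E) * (Ig * Ih) := by rw [← hE2]; exact P1
      _ ≤ (E * E) * ((E * Zmn σ f lam l m) * (E * Zmn σ f lam m n)) := by
          refine mul_le_mul_of_nonneg_left ?_ (by positivity)
          exact mul_le_mul P4 P6 hIh.le (by positivity)
      _ = (E * E * (E * E)) * (Zmn σ f lam l m * Zmn σ f lam m n) := by ring
  have lo : Zmn σ f lam l m * Zmn σ f lam m n ≤ (E * E * (E * E)) * Zmn σ f lam l n := by
    calc Zmn σ f lam l m * Zmn σ f lam m n ≤ (E * Ig) * (E * Ih) :=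
          mul_le_mul P3 P5 hZmnpos.le (by positivity)
      _ = (E * E) * (Ig * Ih) := by ring
      _ ≤ (E * E) * ((E * E) * Zmn σ f lam l n) := by
          refine mul_le_mul_of_nonneg_left ?_ (by positivity)
          rw [← hE2]; exact P2
      _ = (E * E * (E * E)) * Zmn σ f lam l n := by ring
  have hprod : 0 < Zmn σ f lam l m * Zmn σ f lam m n := mul_pos hZlmpos hZmnpos
  constructor
  · rw [le_div_iff₀ hprod, Real.exp_neg, hE4]
    rw [inv_mul_le_iff₀ (by positivity)]
    exact lo
  · rw [div_le_iff₀ hprod, hE4]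
    exact up
end
end

section
/- (Almost-sure bounds from the free energy.) Let (Ω, 𝒜, ν) be a probability space, (W_n) a sequence of real-valued random variables on Ω, and (a_n) a sequence of positive reals with a_n → ∞ such that Σ_n e^{−ε a_n} < ∞ for every ε > 0. Assume that for every β ∈ ℝ the limit c(β) := lim_{n→∞} (1/a_n) log ∫_Ω e^{β W_n} dν exists and is finite. Then c is convex with c(0) = 0, its one-sided derivatives c'₋(0) ≤ c'₊(0) at 0 exist, and for ν-almost every ω: c'₋(0) ≤ liminf_{n→∞} W_n(ω)/a_n ≤ limsup_{n→∞} W_n(ω)/a_n ≤ c'₊(0). -/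
open MeasureTheory Filter ProbabilityTheory
open scoped Topology ENNReal

private lemma holder_mgf {Ω : Type*} [MeasurableSpace Ω] (ν : Measure Ω)
    [IsProbabilityMeasure ν]
    {X : Ω → ℝ} {s t p q : ℝ} (hp : 0 ≤ p) (hq : 0 ≤ q) (hpq : p + q = 1)
    (hs : Integrable (fun ω => Real.exp (s * X ω)) ν)
    (ht : Integrable (fun ω => Real.exp (t * X ω)) ν)
    (hst : Integrable (fun ω => Real.exp ((p * s + q * t) * X ω)) ν) :
    ∫ ω, Real.exp ((p * s + q * t) * X ω) ∂ν ≤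
      (∫ ω, Real.exp (s * X ω) ∂ν) ^ p * (∫ ω, Real.exp (t * X ω) ∂ν) ^ q := by
  have hA : 0 < ∫ ω, Real.exp (s * X ω) ∂ν := mgf_pos hs
  have hB : 0 < ∫ ω, Real.exp (t * X ω) ∂ν := mgf_pos ht
  have h1 := MeasureTheory.ofReal_integral_eq_lintegral_ofReal hst
    (ae_of_all _ fun ω => (Real.exp_pos _).le)
  have h2 := MeasureTheory.ofReal_integral_eq_lintegral_ofReal hs
    (ae_of_all _ fun ω => (Real.exp_pos _).le)
  have h3 := MeasureTheory.ofReal_integral_eq_lintegral_ofReal ht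
    (ae_of_all _ fun ω => (Real.exp_pos _).le)
  have key : (fun ω => ENNReal.ofReal (Real.exp ((p * s + q * t) * X ω))) =
      fun ω => ENNReal.ofReal (Real.exp (s * X ω)) ^ p
        * ENNReal.ofReal (Real.exp (t * X ω)) ^ q := by
    funext ω
    rw [ENNReal.ofReal_rpow_of_pos (Real.exp_pos _),
      ENNReal.ofReal_rpow_of_pos (Real.exp_pos _),
      ← ENNReal.ofReal_mul (by positivity), ← Real.exp_mul, ← Real.exp_mul, ← Real.exp_add]
    congr 2
    ring
  have hH := ENNReal.lintegral_mul_norm_pow_le (μ := ν)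
    (hs.aemeasurable.ennreal_ofReal) (ht.aemeasurable.ennreal_ofReal) hp hq hpq
  refine (ENNReal.ofReal_le_ofReal_iff (by positivity)).mp ?_
  rw [h1, ENNReal.ofReal_mul (by positivity), ← ENNReal.ofReal_rpow_of_pos hA,
    ← ENNReal.ofReal_rpow_of_pos hB, h2, h3, key]
  exact hH

private lemma tail_bound {Ω : Type*} [MeasurableSpace Ω] (ν : Measure Ω)
    [IsProbabilityMeasure ν]
    (W : ℕ → Ω → ℝ) (a : ℕ → ℝ) (ha : ∀ n, 0 < a n)
    (hsum : ∀ ε : ℝ, 0 < ε → Summable fun n => Real.exp (-(ε * a n)))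
    {β L q : ℝ} (hβ : 0 < β) (hLq : L < β * q)
    (hint : ∀ n, Integrable (fun ω => Real.exp (β * W n ω)) ν)
    (hL : Tendsto (fun n => (a n)⁻¹ * Real.log (∫ ω, Real.exp (β * W n ω) ∂ν)) atTop (𝓝 L)) :
    ∀ᵐ ω ∂ν, ∀ᶠ n in atTop, W n ω < q * a n := by
  set ε := β * q - L with hε_def
  have hε : 0 < ε := by simp only [hε_def]; linarith
  have hev : ∀ᶠ n in atTop,
      (a n)⁻¹ * Real.log (∫ ω, Real.exp (β * W n ω) ∂ν) < L + ε / 2 :=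
    hL.eventually_lt_const (by linarith)
  have hbound : ∀ᶠ n in atTop,
      (ν {ω | q * a n ≤ W n ω}).toReal ≤ Real.exp (-(ε / 2 * a n)) := by
    filter_upwards [hev] with n hn
    have hmgf_eq : mgf (W n) ν β = ∫ ω, Real.exp (β * W n ω) ∂ν := rfl
    have hZpos : 0 < mgf (W n) ν β := mgf_pos (hint n)
    have hlog : Real.log (mgf (W n) ν β) < a n * (L + ε / 2) := by
      have h3 : a n * ((a n)⁻¹ * Real.log (mgf (W n) ν β)) < a n * (L + ε / 2) := by
        rw [hmgf_eq]; exact (mul_lt_mul_iff_right₀ (ha n)).2 hn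
      rwa [← mul_assoc, mul_inv_cancel₀ (ha n).ne', one_mul] at h3
    have hmgf_le : mgf (W n) ν β ≤ Real.exp (a n * (L + ε / 2)) := by
      rw [← Real.exp_log hZpos]
      exact Real.exp_le_exp.2 hlog.le
    calc (ν {ω | q * a n ≤ W n ω}).toReal
        ≤ Real.exp (-β * (q * a n)) * mgf (W n) ν β :=
          measure_ge_le_exp_mul_mgf (q * a n) hβ.le (hint n)
      _ ≤ Real.exp (-β * (q * a n)) * Real.exp (a n * (L + ε / 2)) := by
          exact mul_le_mul_of_nonneg_left hmgf_le (Real.exp_pos _).le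
      _ = Real.exp (-(ε / 2 * a n)) := by
          rw [← Real.exp_add]; congr 1; rw [hε_def]; ring
  have hS : Summable (fun n => (ν {ω | q * a n ≤ W n ω}).toReal) := by
    refine summable_of_isBigO_nat (hsum (ε / 2) (by positivity)) ?_
    refine Asymptotics.IsBigO.of_bound 1 ?_
    filter_upwards [hbound] with n hn
    simpa [Real.norm_eq_abs, abs_of_nonneg ENNReal.toReal_nonneg,
      abs_of_nonneg (Real.exp_pos _).le] using hn
  have htsum : (∑' n, ν {ω | q * a n ≤ W n ω}) ≠ ∞ := by
    have heq : (∑' n, ν {ω | q * a n ≤ W n ω})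
        = ENNReal.ofReal (∑' n, (ν {ω | q * a n ≤ W n ω}).toReal) := by
      rw [ENNReal.ofReal_tsum_of_nonneg (fun n => ENNReal.toReal_nonneg) hS]
      exact tsum_congr fun n => (ENNReal.ofReal_toReal (measure_ne_top ν _)).symm
    rw [heq]
    exact ENNReal.ofReal_ne_top
  filter_upwards [MeasureTheory.ae_eventually_notMem htsum] with ω hω
  exact hω.mono fun n hn => not_le.1 hn

/-- Almost-sure bounds from the free energy: if the free energy
`c(β) = lim (1/a_n) log ∫ e^{β W_n} dν` exists for all `β`, then `c` is convex with
`c(0) = 0`, its one-sided derivatives at `0` exist, and almost surely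
`c'₋(0) ≤ liminf W_n/a_n ≤ limsup W_n/a_n ≤ c'₊(0)`. -/
theorem as_bounds_from_free_energy {Ω : Type*} [MeasurableSpace Ω]
    (ν : Measure Ω) [IsProbabilityMeasure ν]
    (W : ℕ → Ω → ℝ) (hWm : ∀ n, Measurable (W n))
    (a : ℕ → ℝ) (ha : ∀ n, 0 < a n) (hatop : Tendsto a atTop atTop)
    (hsum : ∀ ε : ℝ, 0 < ε → Summable fun n => Real.exp (-(ε * a n)))
    (hint : ∀ (β : ℝ) (n : ℕ), Integrable (fun ω => Real.exp (β * W n ω)) ν)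
    (c : ℝ → ℝ)
    (hc : ∀ β : ℝ, Tendsto
      (fun n => (a n)⁻¹ * Real.log (∫ ω, Real.exp (β * W n ω) ∂ν)) atTop (𝓝 (c β))) :
    ConvexOn ℝ Set.univ c ∧ c 0 = 0 ∧
    ∃ dm dp : ℝ,
      HasDerivWithinAt c dm (Set.Iio 0) 0 ∧ HasDerivWithinAt c dp (Set.Ioi 0) 0 ∧ dm ≤ dp ∧
      ∀ᵐ ω ∂ν, dm ≤ Filter.liminf (fun n => W n ω / a n) atTop ∧
        Filter.limsup (fun n => W n ω / a n) atTop ≤ dp := by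
  have hZpos : ∀ (β : ℝ) (n : ℕ), (0:ℝ) < ∫ ω, Real.exp (β * W n ω) ∂ν :=
    fun β n => mgf_pos (hint β n)
  -- convexity
  have hconv : ConvexOn ℝ Set.univ c := by
    refine ⟨convex_univ, fun x _ y _ p q hp hq hpq => ?_⟩
    simp only [smul_eq_mul]
    refine le_of_tendsto_of_tendsto' (hc (p * x + q * y))
      (((hc x).const_mul p).add ((hc y).const_mul q)) (fun n => ?_)
    have hH := holder_mgf ν hp hq hpq (hint x n) (hint y n) (hint (p * x + q * y) n)
    have hlog : Real.log (∫ ω, Real.exp ((p * x + q * y) * W n ω) ∂ν)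
        ≤ p * Real.log (∫ ω, Real.exp (x * W n ω) ∂ν)
          + q * Real.log (∫ ω, Real.exp (y * W n ω) ∂ν) := by
      calc Real.log (∫ ω, Real.exp ((p * x + q * y) * W n ω) ∂ν)
          ≤ Real.log ((∫ ω, Real.exp (x * W n ω) ∂ν) ^ p
              * (∫ ω, Real.exp (y * W n ω) ∂ν) ^ q) :=
            Real.log_le_log (hZpos _ n) hH
        _ = p * Real.log (∫ ω, Real.exp (x * W n ω) ∂ν)
              + q * Real.log (∫ ω, Real.exp (y * W n ω) ∂ν) := by
            rw [Real.log_mul (Real.rpow_pos_of_pos (hZpos x n) p).ne'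
              (Real.rpow_pos_of_pos (hZpos y n) q).ne',
              Real.log_rpow (hZpos x n), Real.log_rpow (hZpos y n)]
    have := mul_le_mul_of_nonneg_left hlog (inv_nonneg.2 (ha n).le)
    linarith [this]
  -- c 0 = 0
  have hc0 : c 0 = 0 := by
    have h0 := hc 0
    have heq : (fun n => (a n)⁻¹ * Real.log (∫ ω, Real.exp (0 * W n ω) ∂ν))
        = fun _ : ℕ => (0:ℝ) := by
      funext n
      simp [measure_univ]
    rw [heq] at h0
    exact tendsto_nhds_unique h0 tendsto_const_nhds
  -- slope function
  set g : ℝ → ℝ := fun b => (c b - c 0) / (b - 0) with hg_def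
  have hgval : ∀ b : ℝ, g b = c b / b := by
    intro b; rw [hg_def]; simp [hc0]
  have hsec : ∀ {x y : ℝ}, x ≠ 0 → y ≠ 0 → x ≤ y → g x ≤ g y := by
    intro x y hx hy hxy
    exact hconv.secant_mono (Set.mem_univ 0) (Set.mem_univ x) (Set.mem_univ y) hx hy hxy
  have hne_p : (g '' Set.Ioi 0).Nonempty := ⟨g 1, 1, by norm_num, rfl⟩
  have hne_m : (g '' Set.Iio 0).Nonempty := ⟨g (-1), -1, by norm_num, rfl⟩
  have hbdd_p : BddBelow (g '' Set.Ioi 0) := by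
    refine ⟨g (-1), ?_⟩
    rintro b ⟨x, hx, rfl⟩
    exact hsec (by norm_num) (ne_of_gt hx) (by simp only [Set.mem_Ioi] at hx; linarith)
  have hbdd_m : BddAbove (g '' Set.Iio 0) := by
    refine ⟨g 1, ?_⟩
    rintro b ⟨x, hx, rfl⟩
    exact hsec (ne_of_lt hx) one_ne_zero (by simp only [Set.mem_Iio] at hx; linarith)
  set dp := sInf (g '' Set.Ioi 0) with hdp_def
  set dm := sSup (g '' Set.Iio 0) with hdm_def
  have hmono_p : MonotoneOn g (Set.Ioi 0) :=
    fun x hx y hy hxy => hsec (ne_of_gt hx) (ne_of_gt hy) hxy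
  have hmono_m : MonotoneOn g (Set.Iio 0) :=
    fun x hx y hy hxy => hsec (ne_of_lt hx) (ne_of_lt hy) hxy
  have htp : Tendsto g (𝓝[>] (0:ℝ)) (𝓝 dp) := hmono_p.tendsto_nhdsGT hbdd_p
  have htm : Tendsto g (𝓝[<] (0:ℝ)) (𝓝 dm) := hmono_m.tendsto_nhdsLT hbdd_m
  have hslope : slope c 0 = g := funext fun b => slope_def_field c 0 b
  have hderivp : HasDerivWithinAt c dp (Set.Ioi 0) 0 := by
    rw [hasDerivWithinAt_iff_tendsto_slope, hslope,
      Set.diff_singleton_eq_self (by simp)]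
    exact htp
  have hderivm : HasDerivWithinAt c dm (Set.Iio 0) 0 := by
    rw [hasDerivWithinAt_iff_tendsto_slope, hslope,
      Set.diff_singleton_eq_self (by simp)]
    exact htm
  have hdmdp : dm ≤ dp := by
    refine csSup_le hne_m ?_
    rintro b ⟨x, hx, rfl⟩
    refine le_csInf hne_p ?_
    rintro b' ⟨y, hy, rfl⟩
    exact hsec (ne_of_lt hx) (ne_of_gt hy) (le_of_lt (lt_trans hx hy))
  -- upper tail
  have hA : ∀ r : ℚ, dp < (r:ℝ) → ∀ᵐ ω ∂ν, ∀ᶠ n in atTop, W n ω < (r:ℝ) * a n := by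
    intro r hr
    obtain ⟨b, hb, hbr⟩ := exists_lt_of_csInf_lt hne_p hr
    obtain ⟨β, hβ, rfl⟩ := hb
    have hβ0 : (0:ℝ) < β := hβ
    have hcβ : c β < β * (r:ℝ) := by
      have h1 : c β / β < (r:ℝ) := by rw [← hgval β]; exact hbr
      rw [div_lt_iff₀ hβ0] at h1
      linarith
    exact tail_bound ν W a ha hsum hβ0 hcβ (hint β) (hc β)
  -- lower tail
  have hB : ∀ r : ℚ, (r:ℝ) < dm → ∀ᵐ ω ∂ν, ∀ᶠ n in atTop, (r:ℝ) * a n < W n ω := by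
    intro r hr
    obtain ⟨b, hb, hrb⟩ := exists_lt_of_lt_csSup hne_m hr
    obtain ⟨β, hβ, rfl⟩ := hb
    have hβ0 : β < 0 := hβ
    have hcβ : c β < β * (r:ℝ) := by
      have h1 : (r:ℝ) < c β / β := by rw [← hgval β]; exact hrb
      rw [lt_div_iff_of_neg hβ0] at h1
      linarith
    have hint' : ∀ n, Integrable (fun ω => Real.exp ((-β) * (-(W n ω)))) ν := by
      intro n; simpa [neg_mul_neg] using hint β n
    have hL' : Tendsto
        (fun n => (a n)⁻¹ * Real.log (∫ ω, Real.exp ((-β) * (-(W n ω))) ∂ν)) atTop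
        (𝓝 (c β)) := by
      simpa [neg_mul_neg] using hc β
    have htail := tail_bound ν (fun n ω => -(W n ω)) a ha hsum
      (β := -β) (L := c β) (q := -(r:ℝ)) (by linarith) (by rw [neg_mul_neg]; exact hcβ)
      hint' hL'
    filter_upwards [htail] with ω hω
    refine hω.mono fun n hn => ?_
    have : -(W n ω) < -(r:ℝ) * a n := hn
    linarith [this]
  have hA' : ∀ᵐ ω ∂ν, ∀ r : ℚ, dp < (r:ℝ) → ∀ᶠ n in atTop, W n ω < (r:ℝ) * a n := by
    rw [ae_all_iff]
    intro r
    by_cases hr : dp < (r:ℝ)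
    · filter_upwards [hA r hr] with ω hω _
      exact hω
    · filter_upwards with ω hr'
      exact absurd hr' hr
  have hB' : ∀ᵐ ω ∂ν, ∀ r : ℚ, (r:ℝ) < dm → ∀ᶠ n in atTop, (r:ℝ) * a n < W n ω := by
    rw [ae_all_iff]
    intro r
    by_cases hr : (r:ℝ) < dm
    · filter_upwards [hB r hr] with ω hω _
      exact hω
    · filter_upwards with ω hr'
      exact absurd hr' hr
  refine ⟨hconv, hc0, dm, dp, hderivm, hderivp, hdmdp, ?_⟩
  filter_upwards [hA', hB'] with ω hup hlow
  obtain ⟨q1, hq1⟩ := exists_rat_gt dp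
  obtain ⟨q0, hq0⟩ := exists_rat_lt dm
  have hub : ∀ᶠ n in atTop, W n ω / a n ≤ (q1:ℝ) :=
    (hup q1 hq1).mono fun n hn => (div_le_iff₀ (ha n)).2 (by linarith)
  have hlb : ∀ᶠ n in atTop, (q0:ℝ) ≤ W n ω / a n :=
    (hlow q0 hq0).mono fun n hn => (le_div_iff₀ (ha n)).2 (by linarith)
  have hcob_le : IsCoboundedUnder (· ≤ ·) atTop (fun n => W n ω / a n) :=
    isCoboundedUnder_le_of_eventually_le atTop hlb
  have hcob_ge : IsCoboundedUnder (· ≥ ·) atTop (fun n => W n ω / a n) :=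
    isCoboundedUnder_ge_of_eventually_le atTop hub
  constructor
  · by_contra h
    push_neg at h
    obtain ⟨r, hr1, hr2⟩ := exists_rat_btwn h
    have hle : (r:ℝ) ≤ liminf (fun n => W n ω / a n) atTop :=
      le_liminf_of_le hcob_ge
        ((hlow r hr2).mono fun n hn => (le_div_iff₀ (ha n)).2 (by linarith))
    linarith
  · by_contra h
    push_neg at h
    obtain ⟨r, hr1, hr2⟩ := exists_rat_btwn h
    have hle : limsup (fun n => W n ω / a n) atTop ≤ (r:ℝ) :=
      limsup_le_of_le hcob_le
        ((hup r hr1).mono fun n hn => (div_le_iff₀ (ha n)).2 (by linarith))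
    linarith
end
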